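/- Let R be a Noetherian local ring with maximal ideal m ≠ (0), with R/m finite, and R complete with respect to the m-adic topology. Let f ∈ R[x₁,...,xₙ]ⁿ. If the induced map f : (R/m)ⁿ → (R/m)ⁿ is bijective and det((Jf)(a)) is a unit in R for every a ∈ Rⁿ, then f : Rⁿ → Rⁿ is surjective. -/
import Mathlib


open MvPolynomial

section aux
variable {R : Type*} [CommRing R] {n : ℕ}

lemma taylor_aux (I : Ideal R)
    (a h : Fin n → R) (hh : ∀ j, h j ∈ I) (p : MvPolynomial (Fin n) R) :
    eval (a + h) p - eval a p - ∑ j, h j * eval a (pderiv j p) ∈ I ^ 2 := by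
  induction p using MvPolynomial.induction_on with
  | C c => simp
  | add p q hp hq =>
      have e : eval (a + h) (p + q) - eval a (p + q) - ∑ j, h j * eval a (pderiv j (p + q))
          = (eval (a + h) p - eval a p - ∑ j, h j * eval a (pderiv j p))
            + (eval (a + h) q - eval a q - ∑ j, h j * eval a (pderiv j q)) := by
        simp only [eval_add, map_add, mul_add, Finset.sum_add_distrib]
        ring
      rw [e]; exact Ideal.add_mem _ hp hq
  | mul_X p j hp =>
      have hsum : ∑ k, h k * eval a (pderiv k (p * X j))
          = (∑ k, h k * eval a (pderiv k p)) * a j + h j * eval a p := by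
        simp only [pderiv_mul, pderiv_X, map_add, eval_mul, eval_X, Pi.single_apply,
          map_one, map_zero, apply_ite (eval a), mul_ite, mul_one, mul_zero, mul_add,
          Finset.sum_add_distrib, Finset.sum_ite_eq, Finset.mem_univ, if_true, Finset.sum_mul]
        congr 1
        exact Finset.sum_congr rfl fun k _ => by ring
      have key : eval (a + h) (p * X j) - eval a (p * X j)
          - ∑ k, h k * eval a (pderiv k (p * X j))
          = (∑ k, h k * eval a (pderiv k p)) * h j
            + (eval (a + h) p - eval a p - ∑ k, h k * eval a (pderiv k p)) * (a j + h j) := by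
        rw [hsum]
        simp only [eval_mul, eval_X, Pi.add_apply]
        ring
      rw [key]
      refine Ideal.add_mem _ ?_ (Ideal.mul_mem_right _ _ hp)
      rw [sq]
      exact Ideal.mul_mem_mul (Ideal.sum_mem _ fun k _ => Ideal.mul_mem_right _ _ (hh k)) (hh j)

lemma eval_push {S : Type*} [CommRing S] (φ : R →+* S)
    (a : Fin n → R) (p : MvPolynomial (Fin n) R) :
    φ (eval a p) = eval (fun i => φ (a i)) (map φ p) := by
  rw [eval_map]
  exact (eval₂_comp_left φ (RingHom.id R) a p).trans (by rfl)

lemma eval_sub_mem (J : Ideal R) (a a' : Fin n → R)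
    (ha : ∀ i, a i - a' i ∈ J) (p : MvPolynomial (Fin n) R) :
    eval a p - eval a' p ∈ J := by
  rw [← Ideal.Quotient.eq]
  rw [eval_push (Ideal.Quotient.mk J) a p, eval_push (Ideal.Quotient.mk J) a' p]
  have : (fun i => Ideal.Quotient.mk J (a i)) = fun i => Ideal.Quotient.mk J (a' i) :=
    funext fun i => Ideal.Quotient.eq.mpr (ha i)
  rw [this]

end aux


/-- Let `R` be a Noetherian local ring with maximal ideal `m ≠ (0)`, with `R/m` finite
and `R` `m`-adically complete, and let `f ∈ R[x₁,…,xₙ]ⁿ`. If the induced map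
`f : (R/m)ⁿ → (R/m)ⁿ` is bijective and `det((Jf)(a))` is a unit in `R` for every
`a ∈ Rⁿ`, then `f : Rⁿ → Rⁿ` is surjective. -/
theorem stmt_9 {R : Type*} [CommRing R] [IsNoetherianRing R] [IsLocalRing R]
    (hm : IsLocalRing.maximalIdeal R ≠ ⊥)
    (hfin : Finite (R ⧸ IsLocalRing.maximalIdeal R))
    [IsAdicComplete (IsLocalRing.maximalIdeal R) R]
    (n : ℕ) (f : Fin n → MvPolynomial (Fin n) R)
    (hbij : Function.Bijective
      (fun a : Fin n → R ⧸ IsLocalRing.maximalIdeal R => fun i =>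
        MvPolynomial.eval a
          ((f i).map (Ideal.Quotient.mk (IsLocalRing.maximalIdeal R)))))
    (hjac : ∀ a : Fin n → R,
      IsUnit (Matrix.det (Matrix.of fun i j =>
        MvPolynomial.eval a (MvPolynomial.pderiv j (f i))))) :
    Function.Surjective (fun a : Fin n → R => fun i => MvPolynomial.eval a (f i)) := by
  intro b
  set m : Ideal R := IsLocalRing.maximalIdeal R with hmdef
  haveI hcompl : IsAdicComplete m R := by rw [hmdef]; infer_instance
  have hst : ∀ k : ℕ, ((m ^ k) • (⊤ : Submodule R R)) = (m ^ k : Ideal R) := fun k => by simp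
  set F : (Fin n → R) → Fin n → R := fun a i => eval a (f i) with hF
  -- initial approximation
  obtain ⟨abar, habar⟩ := hbij.2 (fun i => Ideal.Quotient.mk m (b i))
  choose a0 ha0 using fun i => Ideal.Quotient.mk_surjective (abar i)
  have h0 : ∀ i, F a0 i - b i ∈ m ^ (0 + 1) := by
    intro i
    rw [pow_one, ← Ideal.Quotient.eq]
    rw [eval_push (Ideal.Quotient.mk m) a0 (f i)]
    have e1 : (fun i => Ideal.Quotient.mk m (a0 i)) = abar := funext ha0
    rw [e1]
    exact congrFun habar i
  -- Newton step
  have step : ∀ (k : ℕ) (a : Fin n → R), (∀ i, F a i - b i ∈ m ^ (k + 1)) →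
      ∃ a', (∀ i, a' i - a i ∈ m ^ (k + 1)) ∧ (∀ i, F a' i - b i ∈ m ^ (k + 2)) := by
    intro k a ha
    set M : Matrix (Fin n) (Fin n) R := Matrix.of fun i j => eval a (pderiv j (f i)) with hM
    set c : Fin n → R := fun i => F a i - b i with hc
    set h : Fin n → R := -(M⁻¹.mulVec c) with hh
    have hhmem : ∀ j, h j ∈ m ^ (k + 1) := by
      intro j
      have : M⁻¹.mulVec c j = ∑ l, M⁻¹ j l * c l := by
        simp [Matrix.mulVec, dotProduct]
      rw [hh, Pi.neg_apply, this]
      exact neg_mem (Ideal.sum_mem _ fun l _ => Ideal.mul_mem_left _ _ (ha l))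
    have hMh : M.mulVec h = -c := by
      rw [hh, Matrix.mulVec_neg, Matrix.mulVec_mulVec, Matrix.mul_nonsing_inv M (hjac a),
        Matrix.one_mulVec]
    refine ⟨a + h, fun i => by simpa using hhmem i, ?_⟩
    intro i
    have ht := taylor_aux (m ^ (k + 1)) a h hhmem (f i)
    have h1 : ∑ j, h j * eval a (pderiv j (f i)) = M.mulVec h i := by
      simp [Matrix.mulVec, dotProduct, hM, mul_comm]
    have e2 : F (a + h) i - b i
        = eval (a + h) (f i) - eval a (f i) - ∑ j, h j * eval a (pderiv j (f i)) := by
      rw [h1, hMh]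
      simp only [hF, Pi.neg_apply, hc]
      ring
    rw [e2]
    have hle : (m ^ (k + 1)) ^ 2 ≤ m ^ (k + 2) := by
      rw [← pow_mul]
      exact Ideal.pow_le_pow_right (by omega)
    exact hle ht
  -- build the Newton sequence
  choose g hg1 hg2 using step
  let s : (k : ℕ) → {a : Fin n → R // ∀ i, F a i - b i ∈ m ^ (k + 1)} := fun k =>
    Nat.rec ⟨a0, h0⟩ (fun k prev => ⟨g k prev.1 prev.2, hg2 k prev.1 prev.2⟩) k
  have hsdiff : ∀ k i, (s (k + 1)).1 i - (s k).1 i ∈ m ^ (k + 1) :=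
    fun k => hg1 k (s k).1 (s k).2
  have hcauchy : ∀ k l, k ≤ l → ∀ i, (s l).1 i - (s k).1 i ∈ m ^ k := by
    intro k l hkl i
    induction l, hkl using Nat.le_induction with
    | base => simp
    | succ l hkl ih =>
        have h2 : (s (l + 1)).1 i - (s l).1 i ∈ m ^ k :=
          Ideal.pow_le_pow_right (by omega) (hsdiff l i)
        have := Ideal.add_mem _ h2 ih
        rwa [sub_add_sub_cancel] at this
  -- take the limit
  have hprec : ∀ i, ∃ L, ∀ k, (s k).1 i ≡ L [SMOD ((m ^ k) • (⊤ : Submodule R R))] := by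
    intro i
    apply IsPrecomplete.prec (IsAdicComplete.toIsPrecomplete)
    intro k l hkl
    rw [SModEq.sub_mem, hst k]
    have := hcauchy k l hkl i
    simpa using neg_mem this
  choose L hL using hprec
  refine ⟨L, ?_⟩
  funext i
  show F L i = b i
  rw [← sub_eq_zero]
  apply IsHausdorff.haus (IsAdicComplete.toIsHausdorff (I := m) (M := R))
  intro k
  rw [SModEq.sub_mem, sub_zero, hst k]
  have h1 : F L i - F (s k).1 i ∈ m ^ k := by
    apply eval_sub_mem
    intro j
    have := (hL j k)
    rw [SModEq.sub_mem, hst k] at this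
    simpa using neg_mem this
  have h2 : F (s k).1 i - b i ∈ m ^ k :=
    Ideal.pow_le_pow_right (Nat.le_succ k) ((s k).2 i)
  have := Ideal.add_mem _ h1 h2
  rwa [sub_add_sub_cancel] at this
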